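/- The riff-shuffle probability mass function sums to 1: for 0 < p < 1, q = 1 - p, and integer m ≥ 1, the sum over k from 0 to m-1 of C(m+k-1, k)·(p^m·q^k + q^m·p^k) equals 1. -/
import Mathlib

/-- One-step recurrence for the "race" partial sums. -/
lemma riff_F_rec (x y : ℝ) (a b : ℕ) :
    ∑ k ∈ Finset.range (b + 1 + 1), ((a + 1 + k).choose k : ℝ) * x ^ (a + 1 + 1) * y ^ k
      = x * ∑ k ∈ Finset.range (b + 1 + 1), ((a + k).choose k : ℝ) * x ^ (a + 1) * y ^ k
        + y * ∑ k ∈ Finset.range (b + 1), ((a + 1 + k).choose k : ℝ) * x ^ (a + 1 + 1) * y ^ k := by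
  rw [Finset.mul_sum, Finset.mul_sum,
    Finset.sum_range_succ' (fun k => ((a + 1 + k).choose k : ℝ) * x ^ (a + 1 + 1) * y ^ k) (b + 1),
    Finset.sum_range_succ' (fun k => x * (((a + k).choose k : ℝ) * x ^ (a + 1) * y ^ k)) (b + 1)]
  have hterm : ∀ k ∈ Finset.range (b + 1),
      ((a + 1 + (k + 1)).choose (k + 1) : ℝ) * x ^ (a + 1 + 1) * y ^ (k + 1)
        = x * (((a + (k + 1)).choose (k + 1) : ℝ) * x ^ (a + 1) * y ^ (k + 1))
          + y * (((a + 1 + k).choose k : ℝ) * x ^ (a + 1 + 1) * y ^ k) := by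
    intro k _
    have h : (a + 1 + (k + 1)).choose (k + 1)
        = (a + 1 + k).choose k + (a + (k + 1)).choose (k + 1) := by
      rw [show a + 1 + (k + 1) = (a + 1 + k) + 1 from rfl, Nat.choose_succ_succ,
        show a + (k + 1) = a + 1 + k by omega]
    rw [h]; push_cast; ring
  rw [Finset.sum_congr rfl hterm, Finset.sum_add_distrib]
  simp [Nat.choose_zero_right]
  ring

/-- Key lemma: probability that one player wins the race plus the probability
that the other wins equals 1. -/
lemma riff_key (x y : ℝ) (hxy : x + y = 1) :
    ∀ n a b : ℕ, a + b = n →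
    (∑ k ∈ Finset.range (b + 1), ((a + k).choose k : ℝ) * x ^ (a + 1) * y ^ k)
      + (∑ k ∈ Finset.range (a + 1), ((b + k).choose k : ℝ) * y ^ (b + 1) * x ^ k) = 1 := by
  intro n
  induction n with
  | zero =>
    intro a b h
    obtain ⟨rfl, rfl⟩ : a = 0 ∧ b = 0 := by omega
    simp; linarith
  | succ n ih =>
    intro a b h
    match a, b with
    | 0, b =>
      have hg := geom_sum_mul y (b + 1)
      simp only [Nat.zero_add, Nat.choose_self, Nat.cast_one, one_mul, pow_one,
        Finset.range_one, Finset.sum_singleton, Nat.add_zero, Nat.choose_zero_right, pow_zero]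
      have hsum : ∑ k ∈ Finset.range (b + 1), x * y ^ k
          = x * ∑ k ∈ Finset.range (b + 1), y ^ k := by rw [Finset.mul_sum]
      linear_combination hsum + (∑ k ∈ Finset.range (b + 1), y ^ k) * hxy - hg
    | a + 1, 0 =>
      have hg := geom_sum_mul x (a + 2)
      simp only [Nat.zero_add, Nat.choose_self, Nat.cast_one, one_mul, pow_one,
        Finset.range_one, Finset.sum_singleton, Nat.add_zero, Nat.choose_zero_right, pow_zero]
      have hsum : ∑ k ∈ Finset.range (a + 1 + 1), y * x ^ k
          = y * ∑ k ∈ Finset.range (a + 1 + 1), x ^ k := by rw [Finset.mul_sum]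
      have h2 : a + 1 + 1 = a + 2 := by omega
      rw [h2] at hsum ⊢
      linear_combination hsum + (∑ k ∈ Finset.range (a + 2), x ^ k) * hxy - hg
    | a + 1, b + 1 =>
      have ih1 := ih a (b + 1) (by omega)
      have ih2 := ih (a + 1) b (by omega)
      rw [riff_F_rec x y a b, riff_F_rec y x b a]
      linear_combination x * ih1 + y * ih2 + hxy

theorem riff_shuffle_sums_to_one (p q : ℝ) (hp0 : 0 < p) (hp1 : p < 1)
    (hq : q = 1 - p) (m : ℕ) (hm : 1 ≤ m) :
    ∑ k ∈ Finset.range m,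
      ((Nat.choose (m + k - 1) k : ℝ) * (p ^ m * q ^ k + q ^ m * p ^ k)) = 1 := by
  obtain ⟨a, rfl⟩ : ∃ a, m = a + 1 := ⟨m - 1, by omega⟩
  have hxy : p + q = 1 := by linarith
  have hkey := riff_key p q hxy (a + a) a a rfl
  calc ∑ k ∈ Finset.range (a + 1),
        ((Nat.choose (a + 1 + k - 1) k : ℝ) * (p ^ (a + 1) * q ^ k + q ^ (a + 1) * p ^ k))
      = ∑ k ∈ Finset.range (a + 1),
        (((a + k).choose k : ℝ) * p ^ (a + 1) * q ^ k
          + ((a + k).choose k : ℝ) * q ^ (a + 1) * p ^ k) := by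
        refine Finset.sum_congr rfl fun k _ => ?_
        rw [show a + 1 + k - 1 = a + k by omega]; ring
    _ = 1 := by rw [Finset.sum_add_distrib]; exact hkey
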